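/- (Nash-Williams) For any finite simple graph G, the arboricity α(G) equals the maximum over all subgraphs S of G with at least 2 vertices of ⌈|E(S)| / (|V(S)| - 1)⌉. -/

import Mathlib

open SimpleGraph

noncomputable def arboricity {V : Type*} (G : SimpleGraph V) : ℕ :=
  sInf {n | ∃ f : Fin n → SimpleGraph V,
    (∀ i, (f i).IsAcyclic) ∧ (∀ i, f i ≤ G) ∧
    ∀ e ∈ G.edgeSet, ∃ i, e ∈ (f i).edgeSet}

namespace NashW

variable {V : Type*}

/-- The single-edge graph. -/
abbrev eg (x y : V) : SimpleGraph V := SimpleGraph.fromEdgeSet {s(x, y)}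

lemma eg_adj {x y a b : V} : (eg x y).Adj a b ↔ s(a, b) = s(x, y) ∧ a ≠ b := by
  simp [eg, SimpleGraph.fromEdgeSet_adj]

lemma eg_le {G : SimpleGraph V} {x y : V} (h : s(x, y) ∈ G.edgeSet) : eg x y ≤ G := by
  intro a b hab
  rw [eg_adj] at hab
  rw [← SimpleGraph.mem_edgeSet, hab.1]
  exact h

lemma edgeSet_eg {x y : V} (hxy : x ≠ y) : (eg x y).edgeSet = {s(x, y)} := by
  rw [eg, SimpleGraph.edgeSet_fromEdgeSet]
  ext e
  simp only [Set.mem_diff, Set.mem_singleton_iff, Set.mem_setOf_eq]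
  constructor
  · rintro ⟨h, _⟩; exact h
  · rintro rfl; exact ⟨rfl, by simp [Sym2.isDiag_iff_proj_eq, hxy]⟩

/-- A graph whose edge set is contained in a singleton is acyclic. -/
lemma isAcyclic_of_edgeSet_subsingleton {H : SimpleGraph V} {e : Sym2 V}
    (h : H.edgeSet ⊆ {e}) : H.IsAcyclic := by
  intro v c hc
  have h3 := hc.three_le_length
  have hnd := hc.edges_nodup
  have hall : ∀ x ∈ c.edges, x = e := fun x hx => h (c.edges_subset_edgeSet hx)
  have hrep : c.edges = List.replicate c.edges.length e :=
    List.eq_replicate_length.2 hall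
  rw [hrep] at hnd
  rw [List.nodup_replicate] at hnd
  have : c.edges.length = c.length := c.length_edges
  omega

lemma eg_isAcyclic (x y : V) : (eg x y).IsAcyclic := by
  apply isAcyclic_of_edgeSet_subsingleton (e := s(x, y))
  rw [eg, SimpleGraph.edgeSet_fromEdgeSet]
  exact Set.diff_subset

/-- Adding an edge between non-reachable vertices keeps a graph acyclic. -/
lemma isAcyclic_sup_eg {H : SimpleGraph V} (hH : H.IsAcyclic) {x y : V}
    (hr : ¬ H.Reachable x y) : (H ⊔ eg x y).IsAcyclic := by
  intro v c hc
  by_cases he : s(x, y) ∈ c.edges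
  · have hadj : (H ⊔ eg x y).Adj x y ∧
        ((H ⊔ eg x y) \ SimpleGraph.fromEdgeSet {s(x, y)}).Reachable x y :=
      SimpleGraph.adj_and_reachable_delete_edges_iff_exists_cycle.2 ⟨v, c, hc, he⟩
    refine hr (hadj.2.mono ?_)
    intro a b hab
    simp only [SimpleGraph.sdiff_adj, SimpleGraph.sup_adj, eg_adj,
      SimpleGraph.fromEdgeSet_adj, Set.mem_singleton_iff] at hab
    rcases hab with ⟨h1 | h1, h2⟩
    · exact h1
    · exact absurd ⟨h1.1, h1.2⟩ h2
  · -- transfer cycle into H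
    have hsub : ∀ e' ∈ c.edges, e' ∈ H.edgeSet := by
      intro e' he'
      have := c.edges_subset_edgeSet he'
      rw [SimpleGraph.edgeSet_sup] at this
      rcases this with h1 | h1
      · exact h1
      · rw [eg, SimpleGraph.edgeSet_fromEdgeSet] at h1
        have : e' = s(x, y) := h1.1
        exact absurd (this ▸ he') he
    exact hH (c.transfer H hsub) (hc.transfer hsub)

/-- Adding an edge between reachable vertices does not change reachability. -/
lemma reachable_sup_eg {H : SimpleGraph V} {x y : V} (hr : H.Reachable x y) :
    ∀ a b : V, (H ⊔ eg x y).Reachable a b ↔ H.Reachable a b := by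
  intro a b
  constructor
  · rintro ⟨w⟩
    induction w with
    | nil => exact SimpleGraph.Reachable.refl _
    | cons h p ih =>
      refine SimpleGraph.Reachable.trans ?_ ih
      rcases h with h | h
      · exact h.reachable
      · rw [eg_adj] at h
        rcases Sym2.eq_iff.1 h.1 with ⟨rfl, rfl⟩ | ⟨rfl, rfl⟩
        · exact hr
        · exact hr.symm
  · exact fun h => h.mono le_sup_left

/-- Removing an edge whose endpoints remain reachable does not change reachability. -/
lemma reachable_deleteEdges {H : SimpleGraph V} {u v : V}
    (hr : (H.deleteEdges {s(u, v)}).Reachable u v) :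
    ∀ a b : V, H.Reachable a b ↔ (H.deleteEdges {s(u, v)}).Reachable a b := by
  intro a b
  constructor
  · rintro ⟨w⟩
    induction w with
    | nil => exact SimpleGraph.Reachable.refl _
    | cons h p ih =>
      refine SimpleGraph.Reachable.trans ?_ ih
      rename_i c d _
      by_cases he : s(c, d) = s(u, v)
      · rcases Sym2.eq_iff.1 he with ⟨rfl, rfl⟩ | ⟨rfl, rfl⟩
        · exact hr
        · exact hr.symm
      · exact SimpleGraph.Adj.reachable (by
          rw [SimpleGraph.deleteEdges_adj]
          exact ⟨h, by simpa using he⟩)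
  · exact fun h => h.mono (SimpleGraph.deleteEdges_le _)

/-- Deleting an edge of the fundamental cycle keeps the graph acyclic. -/
lemma isAcyclic_swap {H : SimpleGraph V} (hH : H.IsAcyclic) {x y : V}
    {P : H.Walk x y} (hP : P.IsPath) {c : Sym2 V} (hc : c ∈ P.edges) :
    ((H ⊔ eg x y).deleteEdges {c}).IsAcyclic := by
  classical
  intro v K hK
  by_cases he : s(x, y) ∈ K.edges
  · have hadj : ((H ⊔ eg x y).deleteEdges {c}).Adj x y ∧
        (((H ⊔ eg x y).deleteEdges {c}) \ SimpleGraph.fromEdgeSet {s(x, y)}).Reachable x y :=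
      SimpleGraph.adj_and_reachable_delete_edges_iff_exists_cycle.2 ⟨v, K, hK, he⟩
    -- the reachability lives in H minus c, avoiding s(x,y)
    have hreach : (H.deleteEdges {c}).Reachable x y := by
      refine hadj.2.mono ?_
      intro a b hab
      simp only [SimpleGraph.sdiff_adj, SimpleGraph.deleteEdges_adj, SimpleGraph.sup_adj,
        eg_adj, SimpleGraph.fromEdgeSet_adj, Set.mem_singleton_iff] at hab ⊢
      obtain ⟨⟨h1 | h1, h2⟩, h3⟩ := hab
      · exact ⟨h1, h2⟩
      · exact absurd ⟨h1.1, h1.2⟩ h3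
    obtain ⟨Q⟩ := hreach
    have hQsub : ∀ e' ∈ Q.edges, e' ∈ H.edgeSet := by
      intro e' he'
      have h1 := Q.edges_subset_edgeSet he'
      rw [SimpleGraph.edgeSet_deleteEdges] at h1
      exact h1.1
    have hQnc : c ∉ Q.edges := by
      intro hcc
      have h1 := Q.edges_subset_edgeSet hcc
      rw [SimpleGraph.edgeSet_deleteEdges] at h1
      exact h1.2 rfl
    set QH := Q.transfer H hQsub with hQH
    have hpeq : (⟨P, hP⟩ : H.Path x y) = QH.toPath := hH.path_unique _ _
    have hcin : c ∈ (QH.toPath : H.Walk x y).edges := by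
      rw [← hpeq]; exact hc
    have : c ∈ QH.edges := QH.edges_toPath_subset hcin
    rw [hQH, Q.edges_transfer] at this
    exact hQnc this
  · have hsub : ∀ e' ∈ K.edges, e' ∈ H.edgeSet := by
      intro e' he'
      have h1 := K.edges_subset_edgeSet he'
      rw [SimpleGraph.edgeSet_deleteEdges, SimpleGraph.edgeSet_sup] at h1
      rcases h1.1 with h2 | h2
      · exact h2
      · rw [eg, SimpleGraph.edgeSet_fromEdgeSet] at h2
        have : e' = s(x, y) := h2.1
        exact absurd (this ▸ he') he
    exact hH (K.transfer H hsub) (hK.transfer hsub)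


/-- The restriction of a graph to edges inside a vertex set `U`. -/
def restr (U : Set V) (H : SimpleGraph V) : SimpleGraph V where
  Adj a b := H.Adj a b ∧ a ∈ U ∧ b ∈ U
  symm := ⟨fun a b ⟨h, ha, hb⟩ => ⟨h.symm, hb, ha⟩⟩
  loopless := ⟨fun a ⟨h, _, _⟩ => H.ne_of_adj h rfl⟩

lemma restr_le (U : Set V) (H : SimpleGraph V) : restr U H ≤ H := fun _ _ h => h.1

lemma restr_adj {U : Set V} {H : SimpleGraph V} {a b : V} :
    (restr U H).Adj a b ↔ H.Adj a b ∧ a ∈ U ∧ b ∈ U := Iff.rfl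

lemma mem_restr_edgeSet {U : Set V} {H : SimpleGraph V} {e : Sym2 V} :
    e ∈ (restr U H).edgeSet ↔ e ∈ H.edgeSet ∧ ∀ a ∈ e, a ∈ U := by
  induction e with
  | _ a b =>
    simp only [SimpleGraph.mem_edgeSet, restr_adj, Sym2.mem_iff]
    constructor
    · rintro ⟨h, ha, hb⟩
      exact ⟨h, fun c hc => by rcases hc with rfl | rfl <;> assumption⟩
    · rintro ⟨h, hall⟩
      exact ⟨h, hall a (Or.inl rfl), hall b (Or.inr rfl)⟩

lemma restr_sup_eg {U : Set V} {H : SimpleGraph V} {x y : V} (hx : x ∈ U) (hy : y ∈ U) :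
    restr U (H ⊔ eg x y) = restr U H ⊔ eg x y := by
  ext a b
  simp only [restr_adj, SimpleGraph.sup_adj, eg_adj]
  constructor
  · rintro ⟨h | h, ha, hb⟩
    · exact Or.inl ⟨h, ha, hb⟩
    · exact Or.inr h
  · rintro (⟨h, ha, hb⟩ | h)
    · exact ⟨Or.inl h, ha, hb⟩
    · refine ⟨Or.inr h, ?_, ?_⟩ <;>
      · rcases Sym2.eq_iff.1 h.1 with ⟨rfl, rfl⟩ | ⟨rfl, rfl⟩ <;> assumption

lemma restr_deleteEdges {U : Set V} {H : SimpleGraph V} (s : Set (Sym2 V)) :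
    restr U (H.deleteEdges s) = (restr U H).deleteEdges s := by
  ext a b
  simp only [restr_adj, SimpleGraph.deleteEdges_adj]
  tauto

/-- Transfer a walk into the restriction, provided all its edges have endpoints in `U`. -/
lemma walk_restr_subset {U : Set V} {H : SimpleGraph V} {x y : V} (P : H.Walk x y)
    (h : ∀ e ∈ P.edges, ∀ a ∈ e, a ∈ U) :
    ∀ e ∈ P.edges, e ∈ (restr U H).edgeSet := fun e he =>
  mem_restr_edgeSet.2 ⟨P.edges_subset_edgeSet he, h e he⟩

/-- If the endpoints of every edge of `H₁` are reachable in `H₂`, then `H₁`-reachability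
implies `H₂`-reachability. -/
lemma reachable_of_forall_adj_reachable {H₁ H₂ : SimpleGraph V}
    (h : ∀ a b : V, H₁.Adj a b → H₂.Reachable a b) {a b : V}
    (hr : H₁.Reachable a b) : H₂.Reachable a b := by
  obtain ⟨w⟩ := hr
  induction w with
  | nil => exact SimpleGraph.Reachable.refl _
  | cons hadj p ih => exact SimpleGraph.Reachable.trans (h _ _ hadj) ih

/-- A walk in `restr U H` gives reachability in the induced graph on `U`. -/
lemma induce_reachable_of_restr {U : Set V} {H : SimpleGraph V} :
    ∀ {a b : V} (_ : (restr U H).Walk a b) (ha : a ∈ U) (hb : b ∈ U),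
      (H.induce U).Reachable ⟨a, ha⟩ ⟨b, hb⟩ := by
  intro a b w
  induction w with
  | nil => intro ha hb; exact SimpleGraph.Reachable.refl _
  | cons hadj p ih =>
    intro ha hb
    have := ih hadj.2.2 hb
    refine SimpleGraph.Reachable.trans (SimpleGraph.Adj.reachable ?_) this
    exact hadj.1


/-- An acyclic graph on a nonempty finite vertex type has at most `card - 1` edges. -/
lemma ncard_edgeSet_le_of_isAcyclic {W : Type*} [Fintype W] [Nonempty W]
    (H : SimpleGraph W) (hH : H.IsAcyclic) :
    H.edgeSet.ncard + 1 ≤ Fintype.card W := by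
  classical
  have hcards : ∀ H' : SimpleGraph W, H'.edgeSet.ncard = H'.edgeFinset.card := fun H' =>
    Set.ncard_eq_toFinset_card' _
  by_contra hcon
  push_neg at hcon
  set A : Set ℕ := {n | ∃ H' : SimpleGraph W, H'.IsAcyclic ∧ n = H'.edgeSet.ncard} with hA
  have hne : A.Nonempty := ⟨H.edgeSet.ncard, H, hH, rfl⟩
  have hbdd : BddAbove A := by
    refine ⟨(Fintype.card W).choose 2, ?_⟩
    rintro n ⟨H', _, rfl⟩
    rw [hcards]
    exact SimpleGraph.card_edgeFinset_le_card_choose_two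
  obtain ⟨H', hH', hcard⟩ := Nat.sSup_mem hne hbdd
  have hle : ∀ H'' : SimpleGraph W, H''.IsAcyclic → H''.edgeSet.ncard ≤ sSup A :=
    fun H'' h'' => le_csSup hbdd ⟨H'', h'', rfl⟩
  have hconn : H'.Connected := by
    rw [SimpleGraph.connected_iff]
    refine ⟨?_, inferInstance⟩
    intro a b
    by_contra hab
    have hne' : a ≠ b := fun h => hab (h ▸ SimpleGraph.Reachable.refl a)
    have hacy := isAcyclic_sup_eg hH' hab
    have hnotadj : ¬ H'.Adj a b := fun h => hab h.reachable
    have hcard' : (H' ⊔ eg a b).edgeSet.ncard = H'.edgeSet.ncard + 1 := by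
      have h2 : (H' ⊔ eg a b).edgeSet = insert s(a, b) H'.edgeSet := by
        rw [SimpleGraph.edgeSet_sup, edgeSet_eg hne', Set.union_singleton]
      rw [h2, Set.ncard_insert_of_notMem (by simpa using hnotadj)]
    have := hle _ hacy
    rw [hcard'] at this
    omega
  have htree : H'.IsTree := ⟨hconn, hH'⟩
  have h3 := htree.card_edgeFinset
  have h1 := hle H hH
  rw [hcards] at hcard
  omega

/-- The induced subgraph of an acyclic graph is acyclic. -/
lemma isAcyclic_induce {H : SimpleGraph V} (hH : H.IsAcyclic) (U : Set V) :
    (H.induce U).IsAcyclic := by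
  intro v c hc
  exact hH _ (hc.map (f := (SimpleGraph.Embedding.induce U).toHom) Subtype.val_injective)


/-- If all of `U` lies in one component of `restr U H` and `H` is acyclic, then there are at
least `|U| - 1` edges inside `U`. -/
lemma ncard_le_ncard_edges_of_connected_on [Fintype V] {H : SimpleGraph V}
    (hH : H.IsAcyclic) {U : Set V} (hU : U.Nonempty)
    (hconn : ∀ a ∈ U, ∀ b ∈ U, (restr U H).Reachable a b) :
    U.ncard ≤ (restr U H).edgeSet.ncard + 1 := by
  classical
  haveI : Nonempty ↥U := ⟨⟨hU.choose, hU.choose_spec⟩⟩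
  have htree : (H.induce U).IsTree := by
    refine ⟨(SimpleGraph.connected_iff _).2 ⟨?_, inferInstance⟩, isAcyclic_induce hH U⟩
    rintro ⟨a, ha⟩ ⟨b, hb⟩
    obtain ⟨w⟩ := hconn a ha b hb
    exact induce_reachable_of_restr w ha hb
  have hcardU : U.ncard = Fintype.card ↥U := by
    rw [Set.ncard_eq_toFinset_card', Set.toFinset_card]
  have h1 := htree.card_edgeFinset
  have h2 : (H.induce U).edgeSet.ncard = (H.induce U).edgeFinset.card :=
    Set.ncard_eq_toFinset_card' _
  -- inject induced edges into restr edges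
  have himg : Sym2.map (Subtype.val : ↥U → V) '' (H.induce U).edgeSet ⊆
      (restr U H).edgeSet := by
    rintro e ⟨e₀, he₀, rfl⟩
    induction e₀ with
    | _ a b =>
      rw [SimpleGraph.mem_edgeSet] at he₀
      rw [Sym2.map_pair_eq, SimpleGraph.mem_edgeSet]
      exact ⟨he₀, a.2, b.2⟩
  have hinj : (Sym2.map (Subtype.val : ↥U → V) '' (H.induce U).edgeSet).ncard =
      (H.induce U).edgeSet.ncard :=
    Set.ncard_image_of_injective _ (Sym2.map.injective Subtype.val_injective)
  have h3 : (H.induce U).edgeSet.ncard ≤ (restr U H).edgeSet.ncard := by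
    rw [← hinj]
    exact Set.ncard_le_ncard himg (Set.toFinite _)
  omega


/-- A valid tuple of edge-disjoint forests inside `G`. -/
def Good (G : SimpleGraph V) {k : ℕ} (f : Fin k → SimpleGraph V) : Prop :=
  (∀ i, (f i).IsAcyclic) ∧ (∀ i, f i ≤ G) ∧
    ∀ i j, i ≠ j → Disjoint (f i).edgeSet (f j).edgeSet

noncomputable def size {k : ℕ} (f : Fin k → SimpleGraph V) : ℕ :=
  ∑ i, (f i).edgeSet.ncard

/-- Exchange reachability: tuples obtainable by the classical augmenting exchanges, together
with the currently uncovered edge. -/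
inductive Reach {k : ℕ} (F₀ : Fin k → SimpleGraph V) (x₀ y₀ : V) :
    (Fin k → SimpleGraph V) → V → V → Prop
  | base : Reach F₀ x₀ y₀ F₀ x₀ y₀
  | step {f : Fin k → SimpleGraph V} {x y : V} (h : Reach F₀ x₀ y₀ f x y) (i : Fin k)
      (P : (f i).Walk x y) (hP : P.IsPath) (u v : V) (hc : s(u, v) ∈ P.edges) :
      Reach F₀ x₀ y₀ (Function.update f i (((f i) ⊔ eg x y).deleteEdges {s(u, v)})) u v

section Reach

variable [Fintype V] {G : SimpleGraph V} {k : ℕ} {F₀ : Fin k → SimpleGraph V} {x₀ y₀ : V}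

lemma reach_inv (hG : Good G F₀) (he : s(x₀, y₀) ∈ G.edgeSet)
    (hunc : ∀ i, s(x₀, y₀) ∉ (F₀ i).edgeSet) :
    ∀ {f x y}, Reach F₀ x₀ y₀ f x y →
      Good G f ∧ size f = size F₀ ∧ s(x, y) ∈ G.edgeSet ∧ ∀ i, s(x, y) ∉ (f i).edgeSet := by
  intro f x y h
  induction h with
  | base => exact ⟨hG, rfl, he, hunc⟩
  | @step f x y h i P hP u v hc ih =>
    obtain ⟨⟨hacy, hle, hdisj⟩, hsize, hxyG, hxyunc⟩ := ih
    have hxy_ne : x ≠ y := (G.mem_edgeSet.1 hxyG).ne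
    have hcE : s(u, v) ∈ (f i).edgeSet := P.edges_subset_edgeSet hc
    have hcG : s(u, v) ∈ G.edgeSet := by
      rw [SimpleGraph.mem_edgeSet] at hcE ⊢
      exact (hle i) hcE
    set Fi' : SimpleGraph V := ((f i) ⊔ eg x y).deleteEdges {s(u, v)} with hFi'
    have hEFi' : Fi'.edgeSet = (insert s(x, y) (f i).edgeSet) \ {s(u, v)} := by
      rw [hFi', SimpleGraph.edgeSet_deleteEdges, SimpleGraph.edgeSet_sup, edgeSet_eg hxy_ne,
        Set.union_singleton]
    set f' := Function.update f i Fi' with hf'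
    have hf'app : ∀ j, j ≠ i → f' j = f j := fun j hj => Function.update_of_ne hj _ _
    have hf'i : f' i = Fi' := Function.update_self _ _ _
    have hdis1 : ∀ j, j ≠ i → Disjoint Fi'.edgeSet (f j).edgeSet := by
      intro j hj
      rw [Set.disjoint_left, hEFi']
      rintro e ⟨he1, _⟩ he2
      rcases Set.mem_insert_iff.1 he1 with rfl | he1'
      · exact hxyunc j he2
      · exact (Set.disjoint_left.1 (hdisj i j (Ne.symm hj))) he1' he2
    have hf'eq : ∀ j, j = i → f' j = Fi' := by intro j hj; rw [hj]; exact hf'i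
    refine ⟨⟨?_, ?_, ?_⟩, ?_, hcG, ?_⟩
    · -- acyclic
      intro j
      by_cases hj : j = i
      · rw [hf'eq j hj, hFi']
        exact isAcyclic_swap (hacy i) hP hc
      · rw [hf'app j hj]; exact hacy j
    · -- ≤ G
      intro j
      by_cases hj : j = i
      · rw [hf'eq j hj, hFi']
        exact le_trans (SimpleGraph.deleteEdges_le _) (sup_le (hle i) (eg_le hxyG))
      · rw [hf'app j hj]; exact hle j
    · -- disjoint
      intro a b hab
      by_cases ha : a = i
      · have hb : b ≠ i := fun hh => hab (by rw [ha, hh])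
        rw [hf'eq a ha, hf'app b hb]
        exact hdis1 b hb
      · by_cases hb : b = i
        · rw [hf'eq b hb, hf'app a ha]
          exact (hdis1 a ha).symm
        · rw [hf'app a ha, hf'app b hb]; exact hdisj a b hab
    · -- size
      have hnc : Fi'.edgeSet.ncard = (f i).edgeSet.ncard := by
        rw [hEFi', Set.ncard_diff_singleton_of_mem (Set.mem_insert_iff.2 (Or.inr hcE)),
          Set.ncard_insert_of_notMem (hxyunc i) (Set.toFinite _)]
        omega
      rw [← hsize]
      unfold size
      refine Finset.sum_congr rfl ?_
      intro j _
      by_cases hj : j = i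
      · rw [hf'eq j hj, hnc, hj]
      · rw [hf'app j hj]
    · -- uncovered
      intro j
      by_cases hj : j = i
      · rw [hf'eq j hj, hEFi']
        rintro ⟨_, hh⟩
        exact hh rfl
      · rw [hf'app j hj]
        exact (Set.disjoint_left.1 (hdisj i j (fun hh => hj hh.symm))) hcE

lemma reach_reachable (hG : Good G F₀) (he : s(x₀, y₀) ∈ G.edgeSet)
    (hunc : ∀ i, s(x₀, y₀) ∉ (F₀ i).edgeSet)
    (hmax : ∀ g : Fin k → SimpleGraph V, Good G g → size g ≤ size F₀)
    {f : Fin k → SimpleGraph V} {x y : V} (h : Reach F₀ x₀ y₀ f x y) (i : Fin k) :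
    (f i).Reachable x y := by
  obtain ⟨⟨hacy, hle, hdisj⟩, hsize, hxyG, hxyunc⟩ := reach_inv hG he hunc h
  have hxy_ne : x ≠ y := (G.mem_edgeSet.1 hxyG).ne
  by_contra hnr
  set g := Function.update f i ((f i) ⊔ eg x y) with hg
  have hgi : g i = (f i) ⊔ eg x y := Function.update_self _ _ _
  have hgapp : ∀ j, j ≠ i → g j = f j := fun j hj => Function.update_of_ne hj _ _
  have hEgi : (g i).edgeSet = insert s(x, y) (f i).edgeSet := by
    rw [hgi, SimpleGraph.edgeSet_sup, edgeSet_eg hxy_ne, Set.union_singleton]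
  have hgeq : ∀ j, j = i → g j = (f i) ⊔ eg x y := by intro j hj; rw [hj]; exact hgi
  have hGood : Good G g := by
    refine ⟨?_, ?_, ?_⟩
    · intro j
      by_cases hj : j = i
      · rw [hgeq j hj]; exact isAcyclic_sup_eg (hacy i) hnr
      · rw [hgapp j hj]; exact hacy j
    · intro j
      by_cases hj : j = i
      · rw [hgeq j hj]; exact sup_le (hle i) (eg_le hxyG)
      · rw [hgapp j hj]; exact hle j
    · intro a b hab
      have key : ∀ j, j ≠ i → Disjoint (g i).edgeSet (f j).edgeSet := by
        intro j hj
        rw [Set.disjoint_left, hEgi]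
        rintro e he1 he2
        rcases Set.mem_insert_iff.1 he1 with rfl | he1'
        · exact hxyunc j he2
        · exact (Set.disjoint_left.1 (hdisj i j (Ne.symm hj))) he1' he2
      by_cases ha : a = i
      · have hb : b ≠ i := fun hh => hab (by rw [ha, hh])
        rw [hgapp b hb]
        have : g a = g i := by rw [ha]
        rw [this]
        exact key b hb
      · by_cases hb : b = i
        · have : g b = g i := by rw [hb]
          rw [hgapp a ha, this]
          exact (key a ha).symm
        · rw [hgapp a ha, hgapp b hb]; exact hdisj a b hab
  have hsz : size g = size f + 1 := by
    unfold size
    rw [← Finset.sum_erase_add _ _ (Finset.mem_univ i),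
      ← Finset.sum_erase_add _ _ (Finset.mem_univ i)]
    have h1 : (g i).edgeSet.ncard = (f i).edgeSet.ncard + 1 := by
      rw [hEgi, Set.ncard_insert_of_notMem (hxyunc i) (Set.toFinite _)]
    have h2 : ∀ j ∈ Finset.univ.erase i, (g j).edgeSet.ncard = (f j).edgeSet.ncard := by
      intro j hj
      rw [hgapp j (Finset.ne_of_mem_erase hj)]
    rw [Finset.sum_congr rfl h2, h1]
    omega
  have := hmax g hGood
  rw [hsz, hsize] at this
  omega

end Reach

/-- The set of potentially-uncovered edges. -/
def DD {k : ℕ} (F₀ : Fin k → SimpleGraph V) (x₀ y₀ : V) : Set (Sym2 V) :=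
  {c | ∃ f u v, Reach F₀ x₀ y₀ f u v ∧ c = s(u, v)}

/-- The vertex support of `DD`. -/
def UU {k : ℕ} (F₀ : Fin k → SimpleGraph V) (x₀ y₀ : V) : Set V :=
  {a | ∃ c ∈ DD F₀ x₀ y₀, a ∈ c}

section Reach

variable [Fintype V] {G : SimpleGraph V} {k : ℕ} {F₀ : Fin k → SimpleGraph V} {x₀ y₀ : V}

lemma mem_DD_of_reach {f : Fin k → SimpleGraph V} {u v : V} (h : Reach F₀ x₀ y₀ f u v) :
    s(u, v) ∈ DD F₀ x₀ y₀ := ⟨f, u, v, h, rfl⟩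

lemma mem_UU_of_mem_DD {c : Sym2 V} (hc : c ∈ DD F₀ x₀ y₀) {a : V} (ha : a ∈ c) :
    a ∈ UU F₀ x₀ y₀ := ⟨c, hc, ha⟩

lemma ends_mem_UU {f : Fin k → SimpleGraph V} {u v : V} (h : Reach F₀ x₀ y₀ f u v) :
    u ∈ UU F₀ x₀ y₀ ∧ v ∈ UU F₀ x₀ y₀ :=
  ⟨mem_UU_of_mem_DD (mem_DD_of_reach h) (Sym2.mem_mk_left _ _),
    mem_UU_of_mem_DD (mem_DD_of_reach h) (Sym2.mem_mk_right _ _)⟩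

lemma edges_mem_DD {f : Fin k → SimpleGraph V} {x y : V} (h : Reach F₀ x₀ y₀ f x y)
    (i : Fin k) (P : (f i).Walk x y) (hP : P.IsPath) :
    ∀ e ∈ P.edges, e ∈ DD F₀ x₀ y₀ := by
  intro e
  induction e with
  | _ u v => exact fun he => ⟨_, u, v, Reach.step h i P hP u v he, rfl⟩

lemma edges_ends_UU {f : Fin k → SimpleGraph V} {x y : V} (h : Reach F₀ x₀ y₀ f x y)
    (i : Fin k) (P : (f i).Walk x y) (hP : P.IsPath) :
    ∀ e ∈ P.edges, ∀ a ∈ e, a ∈ UU F₀ x₀ y₀ :=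
  fun e he a ha => mem_UU_of_mem_DD (edges_mem_DD h i P hP e he) ha

/-- Along the exchange process, each endpoint of the uncovered edge is connected to `x₀` in
the graph of potentially-uncovered edges. -/
lemma reach_gd {f : Fin k → SimpleGraph V} {x y : V} (hne₀ : x₀ ≠ y₀)
    (h : Reach F₀ x₀ y₀ f x y) :
    (SimpleGraph.fromEdgeSet (DD F₀ x₀ y₀)).Reachable x₀ x ∧
      (SimpleGraph.fromEdgeSet (DD F₀ x₀ y₀)).Reachable x₀ y := by
  classical
  set GD := SimpleGraph.fromEdgeSet (DD F₀ x₀ y₀) with hGD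
  induction h with
  | base =>
    refine ⟨SimpleGraph.Reachable.refl _, SimpleGraph.Adj.reachable ?_⟩
    rw [hGD, SimpleGraph.fromEdgeSet_adj]
    exact ⟨mem_DD_of_reach Reach.base, hne₀⟩
  | @step f x y h i P hP u v hc ih =>
    have hsub : ∀ e ∈ P.edges, e ∈ GD.edgeSet := by
      intro e he
      rw [hGD, SimpleGraph.edgeSet_fromEdgeSet]
      exact ⟨edges_mem_DD h i P hP e he,
        (f i).not_isDiag_of_mem_edgeSet (P.edges_subset_edgeSet he)⟩
    set PG := P.transfer GD hsub with hPG
    have hu : u ∈ PG.support := by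
      rw [hPG, P.support_transfer hsub]
      exact P.fst_mem_support_of_mem_edges hc
    have hv : v ∈ PG.support := by
      rw [hPG, P.support_transfer hsub]
      exact P.snd_mem_support_of_mem_edges hc
    exact ⟨ih.1.trans ⟨PG.takeUntil u hu⟩, ih.1.trans ⟨PG.takeUntil v hv⟩⟩

/-- The exchange steps do not change the reachability relation of any forest restricted
to the vertex set `UU`. -/
lemma reach_restr_inv (hG : Good G F₀) (he : s(x₀, y₀) ∈ G.edgeSet)
    (hunc : ∀ i, s(x₀, y₀) ∉ (F₀ i).edgeSet)
    {f : Fin k → SimpleGraph V} {x y : V} (h : Reach F₀ x₀ y₀ f x y) :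
    ∀ (j : Fin k) (a b : V),
      (restr (UU F₀ x₀ y₀) (f j)).Reachable a b ↔
        (restr (UU F₀ x₀ y₀) (F₀ j)).Reachable a b := by
  set U := UU F₀ x₀ y₀ with hU
  induction h with
  | base => exact fun j a b => Iff.rfl
  | @step f x y h i P hP u v hc ih =>
    obtain ⟨⟨hacy, hle, hdisj⟩, hsize, hxyG, hxyunc⟩ := reach_inv hG he hunc h
    have hxy_ne : x ≠ y := (G.mem_edgeSet.1 hxyG).ne
    obtain ⟨hxU, hyU⟩ := ends_mem_UU h
    have hPU : ∀ e ∈ P.edges, ∀ a ∈ e, a ∈ U := edges_ends_UU h i P hP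
    set A := restr U (f i) with hA
    have hPsub : ∀ e ∈ P.edges, e ∈ A.edgeSet := walk_restr_subset P hPU
    set P' := P.transfer A hPsub with hP'def
    have hP' : P'.IsPath := hP.transfer hPsub
    have hrA : A.Reachable x y := ⟨P'⟩
    have hsub2 : ∀ e ∈ P'.edges, e ∈ (A ⊔ eg x y).edgeSet := by
      intro e he'
      rw [SimpleGraph.edgeSet_sup]
      exact Or.inl (P'.edges_subset_edgeSet he')
    set P'' := P'.transfer (A ⊔ eg x y) hsub2 with hP''def
    have hP''path : P''.IsPath := hP'.transfer hsub2
    have hedgesP'' : P''.edges = P.edges := by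
      rw [hP''def, P'.edges_transfer, hP'def, P.edges_transfer]
    have hadj : (A ⊔ eg x y).Adj y x :=
      Or.inr (eg_adj.2 ⟨Sym2.eq_swap, hxy_ne.symm⟩)
    have hnotin : s(y, x) ∉ P''.edges := by
      rw [hedgesP'']
      intro hmem
      have := P.edges_subset_edgeSet hmem
      rw [Sym2.eq_swap] at this
      exact hxyunc i this
    have hK : (SimpleGraph.Walk.cons hadj ((⟨P'', hP''path⟩ : (A ⊔ eg x y).Path x y) : (A ⊔ eg x y).Walk x y)).IsCycle :=
      SimpleGraph.Path.cons_isCycle ⟨P'', hP''path⟩ hadj hnotin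
    have hcK : s(u, v) ∈ (SimpleGraph.Walk.cons hadj
        ((⟨P'', hP''path⟩ : (A ⊔ eg x y).Path x y) : (A ⊔ eg x y).Walk x y)).edges := by
      rw [SimpleGraph.Walk.edges_cons]
      right
      rw [hedgesP'']
      exact hc
    have hBuv : ((A ⊔ eg x y).deleteEdges {s(u, v)}).Reachable u v :=
      (SimpleGraph.adj_and_reachable_delete_edges_iff_exists_cycle.2 ⟨y, _, hK, hcK⟩).2
    have hiff : ∀ a b : V, ((A ⊔ eg x y).deleteEdges {s(u, v)}).Reachable a b ↔
        A.Reachable a b := fun a b =>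
      ((reachable_deleteEdges hBuv a b).symm).trans (reachable_sup_eg hrA a b)
    intro j a b
    by_cases hj : j = i
    · have hupd : Function.update f i ((f i ⊔ eg x y).deleteEdges {s(u, v)}) j
          = (f i ⊔ eg x y).deleteEdges {s(u, v)} := by
        rw [hj]; exact Function.update_self _ _ _
      rw [hupd]
      have hrw : restr U ((f i ⊔ eg x y).deleteEdges {s(u, v)})
          = (A ⊔ eg x y).deleteEdges {s(u, v)} := by
        rw [restr_deleteEdges, restr_sup_eg hxU hyU, hA]
      rw [hrw, hj]
      exact (hiff a b).trans (ih i a b)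
    · rw [Function.update_of_ne hj]
      exact ih j a b

end Reach

lemma uncovered_gives_dense [Fintype V] {G : SimpleGraph V} {k : ℕ}
    {F₀ : Fin k → SimpleGraph V} (hG : Good G F₀)
    (hmax : ∀ g : Fin k → SimpleGraph V, Good G g → size g ≤ size F₀)
    {x₀ y₀ : V} (he : s(x₀, y₀) ∈ G.edgeSet) (hunc : ∀ i, s(x₀, y₀) ∉ (F₀ i).edgeSet) :
    ∃ U : Set V, 2 ≤ U.ncard ∧ k * (U.ncard - 1) + 1 ≤ (restr U G).edgeSet.ncard := by
  classical
  obtain ⟨hacy, hle, hdisj⟩ := hG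
  set U := UU F₀ x₀ y₀ with hUdef
  have hne₀ : x₀ ≠ y₀ := (G.mem_edgeSet.1 he).ne
  obtain ⟨hx₀U, hy₀U⟩ := ends_mem_UU (Reach.base (F₀ := F₀) (x₀ := x₀) (y₀ := y₀))
  have hU2 : 2 ≤ U.ncard := by
    have : 1 < U.ncard := (Set.one_lt_ncard_iff (Set.toFinite _)).2 ⟨x₀, y₀, hx₀U, hy₀U, hne₀⟩
    omega
  refine ⟨U, hU2, ?_⟩
  -- endpoints of any reachable uncovered edge are connected in each restricted forest
  have sub1 : ∀ (i : Fin k) {f : Fin k → SimpleGraph V} {u v : V},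
      Reach F₀ x₀ y₀ f u v → (restr U (F₀ i)).Reachable u v := by
    intro i f u v hr
    obtain ⟨W⟩ := reach_reachable ⟨hacy, hle, hdisj⟩ he hunc hmax hr i
    have hP := W.toPath.2
    have hPsub : ∀ e ∈ (W.toPath : (f i).Walk u v).edges, e ∈ (restr U (f i)).edgeSet :=
      walk_restr_subset _ (edges_ends_UU hr i _ hP)
    have : (restr U (f i)).Reachable u v := ⟨(W.toPath : (f i).Walk u v).transfer _ hPsub⟩
    exact (reach_restr_inv ⟨hacy, hle, hdisj⟩ he hunc hr i u v).1 this
  have sub2 : ∀ (i : Fin k), ∀ a ∈ U, (restr U (F₀ i)).Reachable x₀ a := by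
    intro i a haU
    obtain ⟨c, hcD, hac⟩ := haU
    obtain ⟨f, u, v, hr, rfl⟩ := hcD
    have hgd := reach_gd hne₀ hr
    have hGDa : (SimpleGraph.fromEdgeSet (DD F₀ x₀ y₀)).Reachable x₀ a := by
      rcases Sym2.mem_iff.1 hac with rfl | rfl
      · exact hgd.1
      · exact hgd.2
    refine reachable_of_forall_adj_reachable ?_ hGDa
    intro p q hpq
    rw [SimpleGraph.fromEdgeSet_adj] at hpq
    obtain ⟨⟨f', u', v', hr', heq⟩, hne⟩ := hpq
    rcases Sym2.eq_iff.1 heq with ⟨rfl, rfl⟩ | ⟨rfl, rfl⟩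
    · exact sub1 i hr'
    · exact (sub1 i hr').symm
  have hconn : ∀ (i : Fin k), ∀ a ∈ U, ∀ b ∈ U, (restr U (F₀ i)).Reachable a b :=
    fun i a ha b hb => (sub2 i a ha).symm.trans (sub2 i b hb)
  have hbound : ∀ i : Fin k, U.ncard ≤ (restr U (F₀ i)).edgeSet.ncard + 1 :=
    fun i => ncard_le_ncard_edges_of_connected_on (hacy i) ⟨x₀, hx₀U⟩ (hconn i)
  -- counting
  set m := U.ncard with hm
  set Fi : Fin k → Finset (Sym2 V) :=
    fun i => (Set.toFinite ((restr U (F₀ i)).edgeSet)).toFinset with hFi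
  set FE : Finset (Sym2 V) := (Set.toFinite ((restr U G).edgeSet)).toFinset with hFE
  have hmemFi : ∀ i e, e ∈ Fi i ↔ e ∈ (restr U (F₀ i)).edgeSet := by
    intro i e; rw [hFi]; exact Set.Finite.mem_toFinset _
  have hmemFE : ∀ e, e ∈ FE ↔ e ∈ (restr U G).edgeSet := by
    intro e; rw [hFE]; exact Set.Finite.mem_toFinset _
  have hFiFE : ∀ i, Fi i ⊆ FE := by
    intro i e heF
    rw [hmemFi] at heF
    rw [hmemFE]
    rw [mem_restr_edgeSet] at heF ⊢
    exact ⟨(SimpleGraph.edgeSet_subset_edgeSet.2 (hle i)) heF.1, heF.2⟩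
  have hFisub : ∀ i e, e ∈ Fi i → e ∈ (F₀ i).edgeSet := by
    intro i e heF
    rw [hmemFi, mem_restr_edgeSet] at heF
    exact heF.1
  have hdisjF : ∀ a ∈ (Finset.univ : Finset (Fin k)), ∀ b ∈ Finset.univ, a ≠ b →
      Disjoint (Fi a) (Fi b) := by
    intro a _ b _ hab
    rw [Finset.disjoint_left]
    intro e hea heb
    exact (Set.disjoint_left.1 (hdisj a b hab)) (hFisub a e hea) (hFisub b e heb)
  set biU := Finset.univ.biUnion Fi with hbiU
  have hcardbiU : biU.card = ∑ i, (Fi i).card := Finset.card_biUnion hdisjF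
  have hxy_notin : s(x₀, y₀) ∉ biU := by
    rw [hbiU]
    intro hmem
    obtain ⟨i, _, hmem'⟩ := Finset.mem_biUnion.1 hmem
    exact hunc i (hFisub i _ hmem')
  have hxyFE : s(x₀, y₀) ∈ FE := by
    rw [hmemFE, mem_restr_edgeSet]
    refine ⟨he, ?_⟩
    intro a ha
    rcases Sym2.mem_iff.1 ha with rfl | rfl
    · exact hx₀U
    · exact hy₀U
  have hsubFE : insert s(x₀, y₀) biU ⊆ FE := by
    intro e he'
    rcases Finset.mem_insert.1 he' with rfl | he''
    · exact hxyFE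
    · obtain ⟨i, _, hmem'⟩ := Finset.mem_biUnion.1 he''
      exact hFiFE i hmem'
  have h1 : biU.card + 1 ≤ FE.card := by
    have := Finset.card_le_card hsubFE
    rw [Finset.card_insert_of_notMem hxy_notin] at this
    omega
  have h2 : k * (m - 1) ≤ ∑ i, (Fi i).card := by
    have hterm : ∀ i ∈ (Finset.univ : Finset (Fin k)), m - 1 ≤ (Fi i).card := by
      intro i _
      have := hbound i
      have hcards : (restr U (F₀ i)).edgeSet.ncard = (Fi i).card := by
        rw [hFi]; exact Set.ncard_eq_toFinset_card _ _
      omega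
    calc k * (m - 1) = ∑ _i : Fin k, (m - 1) := by
          rw [Finset.sum_const, Finset.card_univ, Fintype.card_fin, smul_eq_mul]
      _ ≤ ∑ i, (Fi i).card := Finset.sum_le_sum hterm
  have hcardFE : FE.card = (restr U G).edgeSet.ncard := by
    rw [hFE]; exact (Set.ncard_eq_toFinset_card _ _).symm
  omega


lemma restr_edgeSet_eq_image {U : Set V} {H : SimpleGraph V} :
    (restr U H).edgeSet = Sym2.map (Subtype.val : ↥U → V) '' (H.induce U).edgeSet := by
  ext e
  constructor
  · intro he
    induction e with
    | _ a b =>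
      rw [SimpleGraph.mem_edgeSet] at he
      obtain ⟨hab, ha, hb⟩ := he
      exact ⟨s(⟨a, ha⟩, ⟨b, hb⟩), (H.induce U).mem_edgeSet.2 hab, by rw [Sym2.map_pair_eq]⟩
  · rintro ⟨e₀, he₀, rfl⟩
    induction e₀ with
    | _ a b =>
      rw [SimpleGraph.mem_edgeSet] at he₀
      rw [Sym2.map_pair_eq, SimpleGraph.mem_edgeSet]
      exact ⟨he₀, a.2, b.2⟩

/-- In an acyclic graph, the number of edges inside a nonempty set `U` is less than `|U|`. -/
lemma ncard_restr_edges_le [Fintype V] {H : SimpleGraph V} (hH : H.IsAcyclic)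
    {U : Set V} (hU : U.Nonempty) :
    (restr U H).edgeSet.ncard + 1 ≤ U.ncard := by
  classical
  haveI : Nonempty ↥U := ⟨⟨hU.choose, hU.choose_spec⟩⟩
  have h1 : (restr U H).edgeSet.ncard = (H.induce U).edgeSet.ncard := by
    rw [restr_edgeSet_eq_image,
      Set.ncard_image_of_injective _ (Sym2.map.injective Subtype.val_injective)]
  have h2 := ncard_edgeSet_le_of_isAcyclic (H.induce U) (isAcyclic_induce hH U)
  have h3 : U.ncard = Fintype.card ↥U := by
    rw [Set.ncard_eq_toFinset_card', Set.toFinset_card]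
  omega

lemma exists_max_good [Fintype V] (G : SimpleGraph V) (k : ℕ) :
    ∃ F₀ : Fin k → SimpleGraph V, Good G F₀ ∧
      ∀ g : Fin k → SimpleGraph V, Good G g → size g ≤ size F₀ := by
  classical
  set A : Set ℕ := {n | ∃ f : Fin k → SimpleGraph V, Good G f ∧ size f = n} with hA
  have hbot : Good G (fun _ : Fin k => (⊥ : SimpleGraph V)) := by
    refine ⟨fun _ => SimpleGraph.isAcyclic_bot, fun _ => bot_le, fun i j _ => ?_⟩
    simp [SimpleGraph.edgeSet_bot]
  have hne : A.Nonempty := ⟨_, _, hbot, rfl⟩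
  have hbdd : BddAbove A := by
    refine ⟨k * Nat.card (Sym2 V), ?_⟩
    rintro n ⟨f, _, rfl⟩
    calc size f ≤ ∑ _i : Fin k, Nat.card (Sym2 V) := by
          refine Finset.sum_le_sum fun i _ => ?_
          rw [← Set.ncard_univ]
          exact Set.ncard_le_ncard (Set.subset_univ _) (Set.toFinite _)
      _ = k * Nat.card (Sym2 V) := by
          rw [Finset.sum_const, Finset.card_univ, Fintype.card_fin, smul_eq_mul]
  obtain ⟨f, hf, hsz⟩ := Nat.sSup_mem hne hbdd
  exact ⟨f, hf, fun g hg => by rw [hsz]; exact le_csSup hbdd ⟨g, hg, rfl⟩⟩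

lemma arbo_set_nonempty [Fintype V] (G : SimpleGraph V) :
    {n | ∃ f : Fin n → SimpleGraph V,
      (∀ i, (f i).IsAcyclic) ∧ (∀ i, f i ≤ G) ∧
      ∀ e ∈ G.edgeSet, ∃ i, e ∈ (f i).edgeSet}.Nonempty := by
  classical
  haveI : Fintype ↥G.edgeSet := Fintype.ofFinite _
  set n := Fintype.card ↥G.edgeSet with hn
  set eqv := (Fintype.equivFin ↥G.edgeSet).symm with heqv
  refine ⟨n, fun i => SimpleGraph.fromEdgeSet {(eqv i : Sym2 V)}, ?_, ?_, ?_⟩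
  · intro i
    apply isAcyclic_of_edgeSet_subsingleton (e := (eqv i : Sym2 V))
    rw [SimpleGraph.edgeSet_fromEdgeSet]
    exact Set.diff_subset
  · intro i a b hab
    rw [SimpleGraph.fromEdgeSet_adj] at hab
    have h1 : s(a, b) = (eqv i : Sym2 V) := hab.1
    have := (eqv i).2
    rw [← h1] at this
    exact G.mem_edgeSet.1 this
  · intro e he
    refine ⟨eqv.symm ⟨e, he⟩, ?_⟩
    rw [SimpleGraph.edgeSet_fromEdgeSet]
    refine ⟨?_, G.not_isDiag_of_mem_edgeSet he⟩
    simp [heqv]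

lemma cast_mul_sub_one {n m : ℕ} (hm : 2 ≤ m) :
    ((n * (m - 1) : ℕ) : ℚ) = (n : ℚ) * ((m : ℚ) - 1) := by
  have h1 : 1 ≤ m := by omega
  push_cast [Nat.cast_sub h1]
  ring


end NashW

open NashW in
/-- Nash-Williams: the arboricity of a finite simple graph equals the maximum over
subgraphs `S` with at least two vertices of `⌈|E(S)| / (|V(S)| - 1)⌉`. -/
theorem arboricity_eq_nashWilliams {V : Type*} [Fintype V] (G : SimpleGraph V) :
    arboricity G =
      sSup {k : ℕ | ∃ S : G.Subgraph, 2 ≤ S.verts.ncard ∧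
        k = ⌈(S.edgeSet.ncard : ℚ) / ((S.verts.ncard : ℚ) - 1)⌉} := by
  classical
  set RHS := {k : ℕ | ∃ S : G.Subgraph, 2 ≤ S.verts.ncard ∧
      (k : ℤ) = ⌈(S.edgeSet.ncard : ℚ) / ((S.verts.ncard : ℚ) - 1)⌉} with hRHS
  have hbddRHS : BddAbove RHS := by
    refine ⟨Nat.card (Sym2 V), ?_⟩
    rintro k ⟨S, hS2, hk⟩
    set E := S.edgeSet.ncard with hE
    set m := S.verts.ncard with hm
    have hm1 : (1 : ℚ) ≤ (m : ℚ) - 1 := by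
      have : (2 : ℚ) ≤ (m : ℚ) := by exact_mod_cast hS2
      linarith
    have h1 : (k : ℤ) ≤ (E : ℤ) := by
      rw [hk]
      calc ⌈(E : ℚ) / ((m : ℚ) - 1)⌉ ≤ ⌈(E : ℚ)⌉ :=
            Int.ceil_le_ceil (div_le_self (by positivity) hm1)
        _ = (E : ℤ) := Int.ceil_natCast E
    have h2 : k ≤ E := by exact_mod_cast h1
    refine h2.trans ?_
    rw [hE, ← Set.ncard_univ]
    exact Set.ncard_le_ncard (Set.subset_univ _) (Set.toFinite _)
  refine le_antisymm ?_ ?_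
  · -- hard direction
    set N := sSup RHS with hN
    obtain ⟨F₀, hGood, hmax⟩ := exists_max_good G N
    by_cases hcov : ∀ e ∈ G.edgeSet, ∃ i, e ∈ (F₀ i).edgeSet
    · exact Nat.sInf_le ⟨F₀, hGood.1, hGood.2.1, hcov⟩
    · exfalso
      push_neg at hcov
      obtain ⟨e₀, he₀, hunc⟩ := hcov
      induction e₀ using Sym2.ind with
      | _ x₀ y₀ =>
      obtain ⟨U, hU2, hcount⟩ := uncovered_gives_dense hGood hmax he₀ hunc
      set S : G.Subgraph :=
        { verts := U
          Adj := fun a b => G.Adj a b ∧ a ∈ U ∧ b ∈ U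
          adj_sub := fun h => h.1
          edge_vert := fun h => h.2.1
          symm := ⟨fun a b h => ⟨h.1.symm, h.2.2, h.2.1⟩⟩ } with hS
      have hSedge : S.edgeSet = (restr U G).edgeSet := by
        ext e
        induction e with
        | _ a b =>
          rw [SimpleGraph.Subgraph.mem_edgeSet, SimpleGraph.mem_edgeSet]
          exact Iff.rfl
      set E := (restr U G).edgeSet.ncard with hE
      set m := U.ncard with hm
      have hm1pos : (0 : ℚ) < (m : ℚ) - 1 := by
        have : (2 : ℚ) ≤ (m : ℚ) := by exact_mod_cast hU2
        linarith
      set q := ⌈(E : ℚ) / ((m : ℚ) - 1)⌉ with hq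
      have hNq : (N : ℤ) < q := by
        rw [hq]
        refine Int.lt_ceil.2 ?_
        rw [lt_div_iff₀ hm1pos]
        have hcast : ((N * (m - 1) + 1 : ℕ) : ℚ) ≤ (E : ℚ) := by exact_mod_cast hcount
        rw [Nat.cast_add, cast_mul_sub_one hU2] at hcast
        push_cast at hcast ⊢
        linarith
      have hq0 : 0 ≤ q := le_of_lt (lt_of_le_of_lt (by positivity) hNq)
      set k' := q.toNat with hk'
      have hk'q : (k' : ℤ) = q := Int.toNat_of_nonneg hq0
      have hmem : k' ∈ RHS := by
        refine ⟨S, ?_, ?_⟩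
        · exact hU2
        · rw [hk'q, hq, hSedge]
      have := le_csSup hbddRHS hmem
      rw [← hN] at this
      have : (N : ℤ) < (k' : ℤ) := hk'q ▸ hNq
      omega
  · -- easy direction
    rcases Set.eq_empty_or_nonempty RHS with hemp | hne
    · rw [hemp]
      simp
    · refine csSup_le hne ?_
      rintro k ⟨S, hS2, hk⟩
      set n := arboricity G with hn
      have hmem : n ∈ {n | ∃ f : Fin n → SimpleGraph V,
          (∀ i, (f i).IsAcyclic) ∧ (∀ i, f i ≤ G) ∧
          ∀ e ∈ G.edgeSet, ∃ i, e ∈ (f i).edgeSet} := Nat.sInf_mem (arbo_set_nonempty G)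
      obtain ⟨f, hacy, hle, hcov⟩ := hmem
      set m := S.verts.ncard with hm
      have hvne : S.verts.Nonempty := by
        apply Set.nonempty_of_ncard_ne_zero
        omega
      have hEle : S.edgeSet.ncard ≤ n * (m - 1) := by
        set Bi : Fin n → Finset (Sym2 V) :=
          fun i => (Set.toFinite ((restr S.verts (f i)).edgeSet)).toFinset with hBi
        have hsub : (Set.toFinite S.edgeSet).toFinset ⊆ Finset.univ.biUnion Bi := by
          intro e he
          rw [Set.Finite.mem_toFinset] at he
          have heG : e ∈ G.edgeSet := S.edgeSet_subset he
          obtain ⟨i, hi⟩ := hcov e heG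
          have hends : ∀ a ∈ e, a ∈ S.verts := by
            induction e with
            | _ a b =>
              rw [SimpleGraph.Subgraph.mem_edgeSet] at he
              intro c hc
              rcases Sym2.mem_iff.1 hc with rfl | rfl
              · exact S.edge_vert he
              · exact S.edge_vert he.symm
          refine Finset.mem_biUnion.2 ⟨i, Finset.mem_univ i, ?_⟩
          rw [hBi, Set.Finite.mem_toFinset, mem_restr_edgeSet]
          exact ⟨hi, hends⟩
        have h1 : S.edgeSet.ncard ≤ ∑ i, (Bi i).card := by
          rw [Set.ncard_eq_toFinset_card _ (Set.toFinite S.edgeSet)]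
          exact (Finset.card_le_card hsub).trans (Finset.card_biUnion_le)
        have h2 : ∀ i ∈ (Finset.univ : Finset (Fin n)), (Bi i).card ≤ m - 1 := by
          intro i _
          have := ncard_restr_edges_le (hacy i) hvne
          have hcards : (restr S.verts (f i)).edgeSet.ncard = (Bi i).card := by
            rw [hBi]; exact Set.ncard_eq_toFinset_card _ _
          omega
        calc S.edgeSet.ncard ≤ ∑ i, (Bi i).card := h1
          _ ≤ ∑ _i : Fin n, (m - 1) := Finset.sum_le_sum h2
          _ = n * (m - 1) := by
            rw [Finset.sum_const, Finset.card_univ, Fintype.card_fin, smul_eq_mul]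
      have hm1pos : (0 : ℚ) < (m : ℚ) - 1 := by
        have : (2 : ℚ) ≤ (m : ℚ) := by exact_mod_cast hS2
        linarith
      have hkn : (k : ℤ) ≤ (n : ℤ) := by
        rw [hk]
        refine Int.ceil_le.2 ?_
        rw [div_le_iff₀ hm1pos]
        have hcast : ((S.edgeSet.ncard : ℕ) : ℚ) ≤ ((n * (m - 1) : ℕ) : ℚ) :=
          Nat.cast_le.2 hEle
        rw [cast_mul_sub_one hS2] at hcast
        push_cast at hcast ⊢
        linarith
      exact_mod_cast hkn
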